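/- Let f : M → N be a homomorphism of finitely generated free abelian groups. Then f is pure (i.e., N/f(M) is torsion-free) if and only if the dual homomorphism f* : Hom(N,ℤ) → Hom(M,ℤ) is pure (i.e., Hom(M,ℤ)/f*(Hom(N,ℤ)) is torsion-free). -/

import Mathlib

/-- The dual homomorphism `f* : Hom(N,ℤ) → Hom(M,ℤ)`, given by precomposition. -/
def dualHom {M N : Type*} [AddCommGroup M] [AddCommGroup N] (f : M →+ N) :
    (N →+ ℤ) →+ (M →+ ℤ) where
  toFun φ := φ.comp f
  map_zero' := rfl
  map_add' _ _ := rfl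

/-- The old Mathlib `AddMonoid.IsTorsionFree`: no nonzero element has finite additive order. -/
def AddMonoid.IsTorsionFree (G : Type*) [AddMonoid G] : Prop :=
  ∀ g : G, g ≠ 0 → ¬IsOfFinAddOrder g

/-- Torsion-freeness of a quotient group in terms of divisibility within the subgroup. -/
lemma tfQuot_iff {N : Type*} [AddCommGroup N] (S : AddSubgroup N) :
    AddMonoid.IsTorsionFree (N ⧸ S) ↔
      ∀ n : ℤ, n ≠ 0 → ∀ y : N, n • y ∈ S → y ∈ S := by
  constructor
  · intro h n hn y hny
    by_contra hy
    have hg : (QuotientAddGroup.mk y : N ⧸ S) ≠ 0 := by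
      simpa [QuotientAddGroup.eq_zero_iff] using hy
    refine h _ hg ?_
    have hzero : n • (QuotientAddGroup.mk y : N ⧸ S) = 0 := by
      have : ((QuotientAddGroup.mk (n • y) : N ⧸ S)) = 0 :=
        (QuotientAddGroup.eq_zero_iff _).mpr hny
      simpa using this
    rcases lt_or_gt_of_ne hn with hlt | hgt
    · refine (isOfFinAddOrder_iff_nsmul_eq_zero).mpr ⟨(-n).toNat, ?_, ?_⟩
      · omega
      · have : ((-n).toNat : ℤ) = -n := by omega
        rw [← natCast_zsmul, this, neg_zsmul, hzero, neg_zero]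
    · refine (isOfFinAddOrder_iff_nsmul_eq_zero).mpr ⟨n.toNat, ?_, ?_⟩
      · omega
      · have : (n.toNat : ℤ) = n := by omega
        rw [← natCast_zsmul, this, hzero]
  · intro h g hg hfin
    obtain ⟨k, hk, hkg⟩ := isOfFinAddOrder_iff_nsmul_eq_zero.mp hfin
    obtain ⟨y, rfl⟩ := QuotientAddGroup.mk_surjective g
    have hky : (k : ℤ) • y ∈ S := by
      rw [← QuotientAddGroup.eq_zero_iff]
      have : ((QuotientAddGroup.mk ((k : ℤ) • y) : N ⧸ S)) = (k : ℤ) • (QuotientAddGroup.mk y : N ⧸ S) := by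
        simp
      rw [this, natCast_zsmul, hkg]
    have := h k (by exact_mod_cast hk.ne') y hky
    exact hg ((QuotientAddGroup.eq_zero_iff _).mpr this)

/-- Forward direction at the module level. -/
lemma forwardL {M N : Type*} [AddCommGroup M] [AddCommGroup N]
    [Module.Free ℤ N] [Module.Finite ℤ N] (F : M →ₗ[ℤ] N)
    (h : ∀ n : ℤ, n ≠ 0 → ∀ y, n • y ∈ LinearMap.range F → y ∈ LinearMap.range F)
    (n : ℤ) (hn : n ≠ 0) (φ : Module.Dual ℤ M)
    (hφ : n • φ ∈ LinearMap.range F.dualMap) : φ ∈ LinearMap.range F.dualMap := by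
  obtain ⟨χ, hχ⟩ := hφ
  set S := LinearMap.range F with hS
  haveI : NoZeroSMulDivisors ℤ (N ⧸ S) := by
    constructor
    intro c x hcx
    by_cases hc : c = 0
    · exact Or.inl hc
    right
    obtain ⟨y, rfl⟩ := S.mkQ_surjective x
    have hcy : c • y ∈ S := by
      rw [← Submodule.Quotient.mk_eq_zero]
      simpa using hcx
    have := h c hc y hcy
    simpa [Submodule.Quotient.mk_eq_zero] using this
  haveI : Module.Free ℤ (N ⧸ S) := Module.free_of_finite_type_torsion_free'
  obtain ⟨π, hπ⟩ := Module.projective_lifting_property S.mkQ LinearMap.id S.mkQ_surjective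
  have hr : ∀ y : N, y - π (S.mkQ y) ∈ S := by
    intro y
    rw [← Submodule.Quotient.mk_eq_zero]
    have : S.mkQ (π (S.mkQ y)) = S.mkQ y := by
      have := congrArg (fun g => g (S.mkQ y)) hπ
      simpa using this
    have h2 : S.mkQ (y - π (S.mkQ y)) = 0 := by
      rw [map_sub, this, sub_self]
    exact h2
  -- retraction r : N →ₗ S
  let r : N →ₗ[ℤ] S := (LinearMap.id - π ∘ₗ S.mkQ).codRestrict S (by intro y; simpa using hr y)
  -- φ kills ker F
  have hker : LinearMap.ker F ≤ LinearMap.ker φ := by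
    intro k hk
    have hFk : F k = 0 := hk
    have : (F.dualMap χ) k = (n • φ) k := by rw [hχ]
    have hnk : n * φ k = 0 := by
      simpa [LinearMap.dualMap_apply, hFk, smul_eq_mul] using this.symm
    have : φ k = 0 := by
      rcases mul_eq_zero.mp hnk with h1 | h1
      · exact absurd h1 hn
      · exact h1
    exact this
  -- factor φ through S
  let φbar : (M ⧸ LinearMap.ker F) →ₗ[ℤ] ℤ := (LinearMap.ker F).liftQ φ hker
  let ψ : S →ₗ[ℤ] ℤ := φbar ∘ₗ (F.quotKerEquivRange.symm : S →ₗ[ℤ] (M ⧸ LinearMap.ker F))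
  refine ⟨ψ ∘ₗ r, ?_⟩
  ext m
  have hrFm : r (F m) = ⟨F m, LinearMap.mem_range_self F m⟩ := by
    apply Subtype.ext
    have hmk : (Submodule.Quotient.mk (F m) : N ⧸ S) = 0 :=
      (Submodule.Quotient.mk_eq_zero S).mpr (LinearMap.mem_range_self F m)
    simp [r, LinearMap.codRestrict, Submodule.mkQ_apply, hmk]
  have hψ : ψ ⟨F m, LinearMap.mem_range_self F m⟩ = φ m := by
    have h1 : F.quotKerEquivRange.symm ⟨F m, LinearMap.mem_range_self F m⟩
        = (LinearMap.ker F).mkQ m := F.quotKerEquivRange_symm_apply_image m _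
    simp only [ψ, LinearMap.comp_apply, LinearEquiv.coe_coe, h1]
    simp [φbar, Submodule.mkQ_apply]
  simp only [LinearMap.dualMap_apply, LinearMap.comp_apply, hrFm, hψ]

/-- Purity at the module level transfers backwards via the double dual. -/
lemma backL {M N : Type*} [AddCommGroup M] [AddCommGroup N]
    [Module.Free ℤ M] [Module.Finite ℤ M] [Module.Free ℤ N] [Module.Finite ℤ N]
    (F : M →ₗ[ℤ] N)
    (h : ∀ n : ℤ, n ≠ 0 → ∀ φ, n • φ ∈ LinearMap.range F.dualMap →
      φ ∈ LinearMap.range F.dualMap)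
    (n : ℤ) (hn : n ≠ 0) (y : N) (hy : n • y ∈ LinearMap.range F) :
    y ∈ LinearMap.range F := by
  have h2 := forwardL F.dualMap h
  have key : F.dualMap.dualMap ∘ₗ (Module.Dual.eval ℤ M) = (Module.Dual.eval ℤ N) ∘ₗ F := by
    ext m φ
    simp [Module.Dual.eval_apply]
  obtain ⟨m, hm⟩ := hy
  have hin : n • (Module.Dual.eval ℤ N y) ∈ LinearMap.range F.dualMap.dualMap := by
    refine ⟨Module.Dual.eval ℤ M m, ?_⟩
    have := congrArg (fun g => g m) key
    simp only [LinearMap.comp_apply] at this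
    rw [this, hm, map_smul]
  obtain ⟨Ψ, hΨ⟩ := h2 n hn _ hin
  obtain ⟨m', rfl⟩ := (Module.bijective_dual_eval ℤ M).surjective Ψ
  have : Module.Dual.eval ℤ N (F m') = Module.Dual.eval ℤ N y := by
    have := congrArg (fun g => g m') key
    simp only [LinearMap.comp_apply] at this
    rw [← this, hΨ]
  exact ⟨m', (Module.bijective_dual_eval ℤ N).injective this⟩

theorem pure_iff_dual_pure
    (M N : Type*) [AddCommGroup M] [AddCommGroup N]
    [Module.Free ℤ M] [Module.Finite ℤ M] [Module.Free ℤ N] [Module.Finite ℤ N]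
    (f : M →+ N) :
    AddMonoid.IsTorsionFree (N ⧸ f.range) ↔
      AddMonoid.IsTorsionFree ((M →+ ℤ) ⧸ (dualHom f).range) := by
  rw [tfQuot_iff, tfQuot_iff]
  set F := f.toIntLinearMap with hF
  have hrange : ∀ y : N, y ∈ f.range ↔ y ∈ LinearMap.range F := by
    intro y; exact Iff.rfl
  have hdrange : ∀ φ : M →+ ℤ, φ ∈ (dualHom f).range ↔
      φ.toIntLinearMap ∈ LinearMap.range F.dualMap := by
    intro φ
    constructor
    · rintro ⟨χ, rfl⟩
      exact ⟨χ.toIntLinearMap, rfl⟩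
    · rintro ⟨χ, hχ⟩
      refine ⟨χ.toAddMonoidHom, ?_⟩
      ext m
      have := congrArg (fun g => g m) hχ
      simpa [dualHom, hF] using this
  constructor
  · intro h n hn φ hφ
    rw [hdrange]
    refine forwardL F (fun n hn y hy => (hrange y).mp (h n hn y ((hrange _).mpr hy)))
      n hn φ.toIntLinearMap ?_
    have : (n • φ).toIntLinearMap = n • φ.toIntLinearMap := by
      ext m; simp
    rw [← this]
    exact (hdrange _).mp hφ
  · intro h n hn y hy
    rw [hrange]
    refine backL F (fun n hn ψ hψ => ?_) n hn y ((hrange _).mpr hy)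
    · have := h n hn ψ.toAddMonoidHom ?_
      · rw [hdrange] at this
        convert this using 1
        ext m; rfl
      · rw [hdrange]
        have : (n • ψ.toAddMonoidHom).toIntLinearMap = n • ψ := by
          ext m; simp
        rw [this]
        exact hψ
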